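/- Let g : (ℝ₊)⁵ → ℝ₊ satisfy: for all Q, P, V, w, C > 0 and all S, U, τ, A > 0, g(S·Q, S⁻¹·U·A⁻¹·P, S·τ⁻¹·V, τ⁻¹·A²·w, U·C) = A · g(Q, P, V, w, C). Then there exists a function f : ℝ₊ → ℝ₊ such that for all Q, P, V, w, C > 0, g(Q, P, V, w, C) = (w·C/(P·V))^{1/3} · f((Q³·P²·w/(V·C²))^{1/3}). -/

import Mathlib

/-- The theorem of Kyle and Obizhaeva: if the market impact `g Q P V w C`
(with `w = σ²` and `C` the bet cost) is positive and invariant under rescaling the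
units of shares (`S`), money (`U`) and time (`τ`) and under leverage neutrality (`A`),
then `g = (1/L) * f Z` with `L = (P*V/(w*C))^(1/3)` and `Z = (Q³P²w/(V C²))^(1/3)`. -/
theorem kyle_obizhaeva (g : ℝ → ℝ → ℝ → ℝ → ℝ → ℝ)
    (hg_pos : ∀ Q P V w C : ℝ, 0 < Q → 0 < P → 0 < V → 0 < w → 0 < C →
      0 < g Q P V w C)
    (hg_inv : ∀ Q P V w C S U τ A : ℝ, 0 < Q → 0 < P → 0 < V → 0 < w → 0 < C →
      0 < S → 0 < U → 0 < τ → 0 < A →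
      g (S * Q) (S⁻¹ * U * A⁻¹ * P) (S * τ⁻¹ * V) (τ⁻¹ * A ^ 2 * w) (U * C)
        = A * g Q P V w C) :
    ∃ f : ℝ → ℝ, (∀ z : ℝ, 0 < z → 0 < f z) ∧
      ∀ Q P V w C : ℝ, 0 < Q → 0 < P → 0 < V → 0 < w → 0 < C →
        g Q P V w C
          = (w * C / (P * V)) ^ ((1 : ℝ) / 3)
            * f ((Q ^ 3 * P ^ 2 * w / (V * C ^ 2)) ^ ((1 : ℝ) / 3)) := by
  refine ⟨fun z => g z 1 1 1 1, fun z hz => hg_pos z 1 1 1 1 hz one_pos one_pos one_pos one_pos,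
    fun Q P V w C hQ hP hV hw hC => ?_⟩
  set x : ℝ := P ^ 2 * w / (C ^ 2 * V) with hxdef
  have hx : 0 < x := by positivity
  set S : ℝ := x ^ ((1 : ℝ) / 3) with hSdef
  have hS : 0 < S := Real.rpow_pos_of_pos hx _
  have hS3 : S ^ 3 = x := by
    rw [hSdef, ← Real.rpow_natCast (x ^ ((1:ℝ)/3)) 3, ← Real.rpow_mul hx.le]
    norm_num
  set A : ℝ := P / (C * S) with hAdef
  have hA : 0 < A := by positivity
  set τ : ℝ := S * V with hτdef
  have hτ : 0 < τ := by positivity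
  have hU : (0:ℝ) < C⁻¹ := by positivity
  have key := hg_inv Q P V w C S C⁻¹ τ A hQ hP hV hw hC hS hU hτ hA
  -- simplify the scaled arguments
  have h1 : S⁻¹ * C⁻¹ * A⁻¹ * P = 1 := by
    rw [hAdef]; field_simp
  have h2 : S * τ⁻¹ * V = 1 := by
    rw [hτdef]; field_simp
  have hx' : S ^ 3 * (C ^ 2 * V) = P ^ 2 * w := by
    rw [hS3, hxdef]; field_simp
  have h3 : τ⁻¹ * A ^ 2 * w = 1 := by
    rw [hτdef, hAdef]
    have : (P / (C * S)) ^ 2 = P ^ 2 / (C ^ 2 * S ^ 2) := by ring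
    rw [this]
    field_simp
    linear_combination -hx'
  have h4 : C⁻¹ * C = 1 := inv_mul_cancel₀ hC.ne'
  have hQ3 : ((Q:ℝ) ^ 3) ^ ((1:ℝ)/3) = Q := by
    rw [← Real.rpow_natCast Q 3, ← Real.rpow_mul hQ.le]
    norm_num
  have hZ : (Q ^ 3 * P ^ 2 * w / (V * C ^ 2)) ^ ((1 : ℝ) / 3) = S * Q := by
    have hrw : Q ^ 3 * P ^ 2 * w / (V * C ^ 2) = Q ^ 3 * x := by
      rw [hxdef]; field_simp
    rw [hrw, Real.mul_rpow (by positivity) hx.le, hQ3, hSdef]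
    exact mul_comm _ _
  have hAinv : A⁻¹ = (w * C / (P * V)) ^ ((1 : ℝ) / 3) := by
    have hrw : w * C / (P * V) = (C / P) ^ 3 * x := by
      rw [hxdef]; field_simp
    have hCP : ((C / P : ℝ) ^ 3) ^ ((1:ℝ)/3) = C / P := by
      rw [← Real.rpow_natCast (C/P) 3, ← Real.rpow_mul (by positivity)]
      norm_num
    rw [hrw, Real.mul_rpow (by positivity) hx.le, hCP, ← hSdef, hAdef]
    field_simp
  rw [h1, h2, h3, h4] at key
  have keyQ : g Q P V w C = A⁻¹ * g (S * Q) 1 1 1 1 := by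
    rw [key, inv_mul_cancel_left₀ hA.ne']
  show g Q P V w C
      = (w * C / (P * V)) ^ ((1 : ℝ) / 3)
        * g ((Q ^ 3 * P ^ 2 * w / (V * C ^ 2)) ^ ((1 : ℝ) / 3)) 1 1 1 1
  rw [hZ, ← hAinv, keyQ]
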